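/- Let n_rest > χ and j_0 = ⌈log_{1+ε}(n_rest/χ)⌉. For each j ≥ 0 and i ∈ [n_rest], let X_{i,j} be pairwise independent (in i) 0/1 variables with P(X_{i,j}=1) = (1+ε)^{−j}, and let Y_j = Σ_i X_{i,j}. Then for each fixed j′ > j_0 + 2, P(Y_{j′} > χ/(1+ε)^2) ≤ ((1+ε)^3/(ε^2 χ)) · (1+ε)^{−(j′ − j_0 − 3)}, and consequently P(∃ j′ > j_0 + 2 with Y_{j′} > χ/(1+ε)^2) ≤ (1+ε)^4/(ε^3 χ). -/

import Mathlib

open MeasureTheory ProbabilityTheory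

/-- Let `n_rest > χ`, `j₀ = ⌈log_{1+ε}(n_rest/χ)⌉`, and for each `j`
let `X_{i,j}`, `i ∈ [n_rest]`, be pairwise independent (in `i`) 0/1 variables with
`P(X_{i,j}=1) = (1+ε)^{-j}`, `Y_j = Σ_i X_{i,j}`. Then for each `j' > j₀+2`,
`P(Y_{j'} > χ/(1+ε)²) ≤ ((1+ε)³/(ε²χ))·(1+ε)^{-(j'-j₀-3)}`, and consequently
`P(∃ j' > j₀+2, Y_{j'} > χ/(1+ε)²) ≤ (1+ε)⁴/(ε³χ)`. -/
theorem pairwise_bernoulli_upper_layers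
    {Ω : Type*} [MeasureSpace Ω] [IsProbabilityMeasure (ℙ : Measure Ω)]
    (ε χ : ℝ) (hε0 : 0 < ε) (hε1 : ε < 1) (hχ0 : 0 < χ)
    (nrest : ℕ) (hn : χ < (nrest : ℝ))
    (j0 : ℤ) (hj0 : j0 = ⌈Real.logb (1 + ε) ((nrest : ℝ) / χ)⌉)
    (X : ℕ → Fin nrest → Ω → ℝ) (hmeas : ∀ j i, Measurable (X j i))
    (h01 : ∀ j i ω, X j i ω = 0 ∨ X j i ω = 1)
    (hp : ∀ j i, ℙ {ω | X j i ω = 1} = ENNReal.ofReal ((1 + ε) ^ (-(j : ℤ))))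
    (hpair : ∀ j i i', i ≠ i' → IndepFun (X j i) (X j i') ℙ) :
    (∀ j' : ℕ, j0 + 2 < (j' : ℤ) →
      ℙ {ω | χ / (1 + ε) ^ 2 < ∑ i, X j' i ω} ≤
        ENNReal.ofReal
          ((1 + ε) ^ 3 / (ε ^ 2 * χ) * (1 + ε) ^ (-((j' : ℤ) - j0 - 3)))) ∧
    ℙ {ω | ∃ j' : ℕ, j0 + 2 < (j' : ℤ) ∧ χ / (1 + ε) ^ 2 < ∑ i, X j' i ω} ≤
      ENNReal.ofReal ((1 + ε) ^ 4 / (ε ^ 3 * χ)) := by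
  have hu1 : (1:ℝ) < 1 + ε := by linarith
  have hu0 : (0:ℝ) < 1 + ε := by linarith
  -- nrest ≤ χ * (1+ε)^j0
  have hnχ : (nrest : ℝ) ≤ χ * (1 + ε) ^ j0 := by
    have h1 : Real.logb (1 + ε) ((nrest : ℝ) / χ) ≤ (j0 : ℝ) := by
      rw [hj0]; exact_mod_cast Int.le_ceil _
    have h2 := Real.rpow_le_rpow_of_exponent_le hu1.le h1
    rw [Real.rpow_logb hu0 (ne_of_gt hu1) (div_pos (lt_trans hχ0 hn) hχ0)] at h2
    rw [Real.rpow_intCast] at h2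
    calc (nrest : ℝ) = ((nrest : ℝ) / χ) * χ := by field_simp
    _ ≤ (1 + ε) ^ j0 * χ := by gcongr
    _ = χ * (1 + ε) ^ j0 := mul_comm _ _
  have hj0pos : 0 < j0 := by
    rw [hj0]
    exact Int.ceil_pos.mpr (Real.logb_pos hu1 ((one_lt_div hχ0).mpr hn))
  have key : ∀ j' : ℕ, j0 + 2 < (j' : ℤ) →
      ℙ {ω | χ / (1 + ε) ^ 2 < ∑ i, X j' i ω} ≤
        ENNReal.ofReal
          ((1 + ε) ^ 3 / (ε ^ 2 * χ) * (1 + ε) ^ (-((j' : ℤ) - j0 - 3))) := by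
    intro j' hj'
    set p : ℝ := (1 + ε) ^ (-(j' : ℤ)) with hpdef
    have hp0 : 0 < p := zpow_pos hu0 _
    have hL2 : ∀ i, MemLp (X j' i) 2 ℙ := by
      intro i
      refine MemLp.of_bound (hmeas j' i).aestronglyMeasurable 1 (ae_of_all _ fun ω => ?_)
      rcases h01 j' i ω with h | h <;> simp [h]
    have hSmeas : ∀ i : Fin nrest, MeasurableSet {ω | X j' i ω = 1} :=
      fun i => (hmeas j' i) (measurableSet_singleton 1)
    have hE : ∀ i : Fin nrest, ∫ ω, X j' i ω = p := by
      intro i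
      have hXind : X j' i = Set.indicator {ω | X j' i ω = 1} (fun _ => (1:ℝ)) := by
        funext ω
        rcases h01 j' i ω with h | h <;>
          simp [Set.indicator_apply, Set.mem_setOf_eq, h]
      rw [hXind, integral_indicator_const (1:ℝ) (hSmeas i), measureReal_def, hp j' i,
        ENNReal.toReal_ofReal hp0.le, smul_eq_mul, mul_one]
    have hsq : ∀ i : Fin nrest, (X j' i) ^ 2 = X j' i := by
      intro i; funext ω
      simp only [Pi.pow_apply]
      rcases h01 j' i ω with h | h <;> simp [h]
    have hvar : ∀ i : Fin nrest, Var[X j' i] ≤ p := by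
      intro i
      rw [variance_eq_sub (hL2 i), hsq i]
      have : ∫ ω, X j' i ω = p := hE i
      simp only [this]
      nlinarith [sq_nonneg p]
    have hMemY : MemLp (∑ i, X j' i) 2 ℙ := memLp_finset_sum' _ fun i _ => hL2 i
    have hEY : ∫ ω, (∑ i, X j' i) ω = (nrest : ℝ) * p := by
      simp_rw [Finset.sum_apply]
      rw [integral_finset_sum _ (fun i _ => (hL2 i).integrable one_le_two)]
      simp [hE, Finset.card_univ, mul_comm]
    have hVarY : Var[∑ i, X j' i] ≤ (nrest : ℝ) * p := by
      rw [IndepFun.variance_sum (fun i _ => hL2 i)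
        (fun i _ j _ hij => hpair j' i j hij)]
      calc ∑ i : Fin nrest, Var[X j' i] ≤ ∑ _i : Fin nrest, p :=
        Finset.sum_le_sum fun i _ => hvar i
      _ = (nrest : ℝ) * p := by simp [Finset.card_univ, mul_comm]
    set r : ℝ := (1 + ε) ^ (-((j' : ℤ) - j0 - 3)) with hrdef
    have hr0 : 0 < r := zpow_pos hu0 _
    have hr1 : r ≤ 1 := by
      rw [hrdef]
      apply zpow_le_one_of_nonpos₀ hu1.le
      omega
    have hnp : (nrest : ℝ) * p ≤ χ * r / (1 + ε) ^ 3 := by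
      have h1 : (nrest : ℝ) * p ≤ χ * (1 + ε) ^ j0 * p :=
        mul_le_mul_of_nonneg_right hnχ hp0.le
      have e : r = (1 + ε) ^ j0 * p * (1 + ε) ^ (3 : ℤ) := by
        rw [hpdef, hrdef, ← zpow_add₀ (ne_of_gt hu0), ← zpow_add₀ (ne_of_gt hu0)]
        congr 1; ring
      have e3 : ((1 + ε : ℝ)) ^ (3 : ℤ) = (1 + ε) ^ (3 : ℕ) := zpow_natCast _ 3
      have h2 : χ * (1 + ε) ^ j0 * p = χ * r / (1 + ε) ^ 3 := by
        rw [e, e3]; field_simp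
      linarith [h2 ▸ h1]
    have hnp0 : 0 ≤ (nrest : ℝ) * p := by positivity
    set t : ℝ := χ / (1 + ε) ^ 2 with htdef
    set c : ℝ := t - (nrest : ℝ) * p with hcdef
    have hcb : χ * ε / (1 + ε) ^ 3 ≤ c := by
      have : χ * r / (1 + ε) ^ 3 ≤ χ * 1 / (1 + ε) ^ 3 := by gcongr
      have ht3 : χ / (1 + ε) ^ 2 - χ * 1 / (1 + ε) ^ 3 = χ * ε / (1 + ε) ^ 3 := by
        field_simp; ring
      rw [hcdef, htdef]
      nlinarith
    have hc0 : 0 < c := lt_of_lt_of_le (by positivity) hcb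
    have hsub : {ω | t < (∑ i, X j' i) ω} ⊆ {ω | c ≤ |(∑ i, X j' i) ω - ∫ ω, (∑ i, X j' i) ω|} := by
      intro ω hω
      simp only [Set.mem_setOf_eq] at hω ⊢
      rw [hEY]
      have : c ≤ (∑ i, X j' i) ω - (nrest : ℝ) * p := by
        rw [hcdef]; linarith
      exact this.trans (le_abs_self _)
    have hset : {ω | χ / (1 + ε) ^ 2 < ∑ i, X j' i ω} = {ω | t < (∑ i, X j' i) ω} := by
      ext ω; simp [htdef, Finset.sum_apply]
    rw [hset]
    calc ℙ {ω | t < (∑ i, X j' i) ω}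
        ≤ ℙ {ω | c ≤ |(∑ i, X j' i) ω - ∫ ω, (∑ i, X j' i) ω|} := measure_mono hsub
      _ ≤ ENNReal.ofReal (Var[∑ i, X j' i] / c ^ 2) := meas_ge_le_variance_div_sq hMemY hc0
      _ ≤ ENNReal.ofReal ((1 + ε) ^ 3 / (ε ^ 2 * χ) * r) := by
          apply ENNReal.ofReal_le_ofReal
          calc Var[∑ i, X j' i] / c ^ 2 ≤ ((nrest:ℝ) * p) / c ^ 2 := by gcongr
            _ ≤ (χ * r / (1 + ε) ^ 3) / (χ * ε / (1 + ε) ^ 3) ^ 2 := by gcongr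
            _ = (1 + ε) ^ 3 / (ε ^ 2 * χ) * r := by field_simp
  refine ⟨key, ?_⟩
  set N : ℕ := (j0 + 3).toNat with hNdef
  have hNcast : (N : ℤ) = j0 + 3 := Int.toNat_of_nonneg (by omega)
  have hsub : {ω | ∃ j' : ℕ, j0 + 2 < (j' : ℤ) ∧ χ / (1 + ε) ^ 2 < ∑ i, X j' i ω} ⊆
      ⋃ k : ℕ, {ω | χ / (1 + ε) ^ 2 < ∑ i, X (k + N) i ω} := by
    rintro ω ⟨j', hj', hlt⟩
    have hNle : N ≤ j' := by omega
    refine Set.mem_iUnion.2 ⟨j' - N, ?_⟩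
    have hjj : j' - N + N = j' := by omega
    rw [hjj]; exact hlt
  set q : ENNReal := ENNReal.ofReal ((1 + ε)⁻¹) with hqdef
  set C : ℝ := (1 + ε) ^ 3 / (ε ^ 2 * χ) with hCdef
  have hterm : ∀ k : ℕ, ℙ {ω | χ / (1 + ε) ^ 2 < ∑ i, X (k + N) i ω} ≤
      ENNReal.ofReal C * q ^ k := by
    intro k
    have hcond : j0 + 2 < ((k + N : ℕ) : ℤ) := by push_cast; omega
    have h := key (k + N) hcond
    have hexp : (-(((k + N : ℕ) : ℤ) - j0 - 3)) = -(k : ℤ) := by push_cast; omega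
    rw [hexp] at h
    refine h.trans_eq ?_
    rw [ENNReal.ofReal_mul (by positivity), hqdef]
    congr 1
    rw [zpow_neg, zpow_natCast, ← inv_pow, ENNReal.ofReal_pow (by positivity)]
  calc ℙ {ω | ∃ j' : ℕ, j0 + 2 < (j' : ℤ) ∧ χ / (1 + ε) ^ 2 < ∑ i, X j' i ω}
      ≤ ℙ (⋃ k : ℕ, {ω | χ / (1 + ε) ^ 2 < ∑ i, X (k + N) i ω}) := measure_mono hsub
    _ ≤ ∑' k : ℕ, ℙ {ω | χ / (1 + ε) ^ 2 < ∑ i, X (k + N) i ω} := measure_iUnion_le _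
    _ ≤ ∑' k : ℕ, ENNReal.ofReal C * q ^ k := ENNReal.tsum_le_tsum hterm
    _ = ENNReal.ofReal C * (1 - q)⁻¹ := by rw [ENNReal.tsum_mul_left, ENNReal.tsum_geometric]
    _ = ENNReal.ofReal ((1 + ε) ^ 4 / (ε ^ 3 * χ)) := by
        have h1q : (1 : ENNReal) - q = ENNReal.ofReal (ε / (1 + ε)) := by
          rw [hqdef, ← ENNReal.ofReal_one, ← ENNReal.ofReal_sub _ (by positivity)]
          congr 1
          field_simp
          ring
        rw [h1q, ← ENNReal.ofReal_inv_of_pos (by positivity),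
          ← ENNReal.ofReal_mul (by positivity)]
        congr 1
        rw [hCdef]
        field_simp
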